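/- The Christoffel symbols of the metric g̃ in the coordinates (x,y,z,t), defined by Γᵏᵢⱼ = (1/2) Σₗ g̃ᵏˡ (∂ᵢ g̃ⱼₗ + ∂ⱼ g̃ᵢₗ − ∂ₗ g̃ᵢⱼ) where (g̃ᵏˡ) is the inverse matrix of (g̃ᵢⱼ), are symmetric in the lower indices and their only nonzero values (up to this symmetry) are: Γ⁴₁₂ = 1/2, Γ⁴₁₃ = −t/2, Γ¹₁₄ = −t/2, Γ²₁₄ = −1/2, Γ⁴₂₂ = −t, Γ⁴₂₃ = 1/2 + 3t²/4, Γ¹₂₄ = −1/2 + t²/4, Γ³₂₄ = −1/2, Γ⁴₃₃ = −t(1 + t²/2), Γ²₃₄ = −1/2 + t²/4, Γ³₃₄ = t/2. -/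

import Mathlib

noncomputable section

/-- The left-invariant frame fields e₁,e₂,e₃,e₄ on ℝ⁴ (coordinates x,y,z,t = p 0,...,p 3). -/
def eVF (i : Fin 4) (p : Fin 4 → ℝ) : Fin 4 → ℝ :=
  ![![1, 0, 0, 0],
    ![p 3, 1, 0, 0],
    ![(p 3) ^ 2 / 2, p 3, 1, 0],
    ![0, 0, 0, 1]] i

/-- The matrix of the metric g̃ at a point with last coordinate t. -/
def gMat (t : ℝ) : Matrix (Fin 4) (Fin 4) ℝ :=
  !![1, -t, t ^ 2 / 2, 0;
     -t, 1 + t ^ 2, -t * (1 + t ^ 2 / 2), 0;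
     t ^ 2 / 2, -t * (1 + t ^ 2 / 2), 1 + t ^ 2 + t ^ 4 / 4, 0;
     0, 0, 0, 1]

/-- The metric g̃ as a bilinear form on each tangent space. -/
def gMet (p X Y : Fin 4 → ℝ) : ℝ :=
  ∑ i, ∑ j, gMat (p 3) i j * X i * Y j

/-- Partial derivative in direction of the i-th coordinate. -/
def pd (i : Fin 4) (f : (Fin 4 → ℝ) → ℝ) (p : Fin 4 → ℝ) : ℝ :=
  deriv (fun s => f (Function.update p i s)) (p i)

/-- The Christoffel symbols Γᵏᵢⱼ of g̃. -/
def Chr (p : Fin 4 → ℝ) (k i j : Fin 4) : ℝ :=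
  (1 / 2) * ∑ l, (gMat (p 3))⁻¹ k l *
    (pd i (fun q => gMat (q 3) j l) p + pd j (fun q => gMat (q 3) i l) p
      - pd l (fun q => gMat (q 3) i j) p)

/-- The Levi-Civita connection of g̃ in coordinates. -/
def nabla (X Y : (Fin 4 → ℝ) → (Fin 4 → ℝ)) (p : Fin 4 → ℝ) : Fin 4 → ℝ :=
  fun k => (∑ i, X p i * pd i (fun q => Y q k) p)
    + ∑ i, ∑ j, Chr p k i j * X p i * Y p j

/-- Lie bracket of vector fields on ℝ⁴. -/
def bracket (X Y : (Fin 4 → ℝ) → (Fin 4 → ℝ)) (p : Fin 4 → ℝ) : Fin 4 → ℝ :=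
  fderiv ℝ Y p (X p) - fderiv ℝ X p (Y p)

/-- The curvature tensor R̃(X,Y)Z = ∇̃_X ∇̃_Y Z − ∇̃_Y ∇̃_X Z − ∇̃_{[X,Y]} Z. -/
def Riem (X Y Z : (Fin 4 → ℝ) → (Fin 4 → ℝ)) (p : Fin 4 → ℝ) : Fin 4 → ℝ :=
  nabla X (nabla Y Z) p - nabla Y (nabla X Z) p - nabla (bracket X Y) Z p

/-- The expected table of Christoffel symbols: ΓExp t k is the (symmetric) matrix
(i,j) ↦ Γᵏᵢⱼ, with the nonzero values listed in the paper and zero elsewhere. -/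
def ChrExp (t : ℝ) : Fin 4 → Matrix (Fin 4) (Fin 4) ℝ :=
  ![!![0, 0, 0, -t / 2;
      0, 0, 0, -1 / 2 + t ^ 2 / 4;
      0, 0, 0, 0;
      -t / 2, -1 / 2 + t ^ 2 / 4, 0, 0],
    !![0, 0, 0, -1 / 2;
      0, 0, 0, 0;
      0, 0, 0, -1 / 2 + t ^ 2 / 4;
      -1 / 2, 0, -1 / 2 + t ^ 2 / 4, 0],
    !![0, 0, 0, 0;
      0, 0, 0, -1 / 2;
      0, 0, 0, t / 2;
      0, -1 / 2, t / 2, 0],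
    !![0, 1 / 2, -t / 2, 0;
      1 / 2, -t, 1 / 2 + 3 * t ^ 2 / 4, 0;
      -t / 2, 1 / 2 + 3 * t ^ 2 / 4, -t * (1 + t ^ 2 / 2), 0;
      0, 0, 0, 0]]


def gInv (t : ℝ) : Matrix (Fin 4) (Fin 4) ℝ :=
  !![1 + t ^ 2 + t ^ 4 / 4, t + t ^ 3 / 2, t ^ 2 / 2, 0;
     t + t ^ 3 / 2, 1 + t ^ 2, t, 0;
     t ^ 2 / 2, t, 1, 0;
     0, 0, 0, 1]

def dMat (t : ℝ) : Matrix (Fin 4) (Fin 4) ℝ :=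
  !![0, -1, t, 0;
     -1, 2 * t, -(1 + 3 * t ^ 2 / 2), 0;
     t, -(1 + 3 * t ^ 2 / 2), 2 * t + t ^ 3, 0;
     0, 0, 0, 0]

lemma gMat_inv (t : ℝ) : (gMat t)⁻¹ = gInv t := by
  apply Matrix.inv_eq_right_inv
  ext i j
  fin_cases i <;> fin_cases j <;>
    simp [gMat, gInv, Matrix.mul_apply, Fin.sum_univ_four] <;> ring

lemma pd_comp_of_ne (f : ℝ → ℝ) (i : Fin 4) (hi : i ≠ 3) (p : Fin 4 → ℝ) :
    pd i (fun q => f (q 3)) p = 0 := by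
  unfold pd
  have h : (fun s => f (Function.update p i s 3)) = fun _ => f (p 3) := by
    funext s
    rw [Function.update_of_ne (Ne.symm hi)]
  rw [h, deriv_const]

lemma pd_comp_three (f : ℝ → ℝ) (p : Fin 4 → ℝ) :
    pd 3 (fun q => f (q 3)) p = deriv f (p 3) := by
  unfold pd
  simp

lemma hdA (t : ℝ) : HasDerivAt (fun s : ℝ => -s) (-1 : ℝ) t := by
  simpa using (hasDerivAt_neg t)

lemma hdB (t : ℝ) : HasDerivAt (fun s : ℝ => s ^ 2 / 2) t t := by
  have h := (hasDerivAt_pow 2 t).div_const 2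
  refine h.congr_deriv ?_
  push_cast; ring

lemma hdC (t : ℝ) : HasDerivAt (fun s : ℝ => 1 + s ^ 2) (2 * t) t := by
  have h := (hasDerivAt_pow 2 t).const_add 1
  refine h.congr_deriv ?_
  push_cast; ring

lemma hdD (t : ℝ) : HasDerivAt (fun s : ℝ => -s * (1 + s ^ 2 / 2)) (-(1 + 3 * t ^ 2 / 2)) t := by
  have h := (((hasDerivAt_id t).mul (((hasDerivAt_pow 2 t).div_const 2).const_add 1))).neg
  convert h using 1
  · rfl
  · rfl
  · funext x; simp only [Pi.neg_apply, Pi.mul_apply, id]; push_cast; ring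
  · simp only [id]; push_cast; ring

lemma hdE (t : ℝ) : HasDerivAt (fun s : ℝ => 1 + s ^ 2 + s ^ 4 / 4) (2 * t + t ^ 3) t := by
  have h := ((hasDerivAt_pow 2 t).const_add 1).add ((hasDerivAt_pow 4 t).div_const 4)
  refine h.congr_deriv ?_
  push_cast; ring

lemma hasDerivAt_gMat (j l : Fin 4) (t : ℝ) :
    HasDerivAt (fun s => gMat s j l) (dMat t j l) t := by
  fin_cases j <;> fin_cases l <;>
    first
    | exact hasDerivAt_const t _
    | exact hdA t
    | exact hdB t
    | exact hdC t
    | exact hdD t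
    | exact hdE t

lemma pd_g (i j l : Fin 4) (p : Fin 4 → ℝ) :
    pd i (fun q => gMat (q 3) j l) p = if i = 3 then dMat (p 3) j l else 0 := by
  by_cases hi : i = 3
  · subst hi
    simp only [if_pos rfl]
    rw [pd_comp_three (fun s => gMat s j l)]
    exact (hasDerivAt_gMat j l (p 3)).deriv
  · rw [if_neg hi]
    exact pd_comp_of_ne (fun s => gMat s j l) i hi p

set_option maxHeartbeats 1600000 in
lemma Chr_eq (p : Fin 4 → ℝ) (k i j : Fin 4) : Chr p k i j = ChrExp (p 3) k i j := by
  unfold Chr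
  rw [gMat_inv]
  simp only [pd_g, Fin.sum_univ_four]
  fin_cases k <;> fin_cases i <;> fin_cases j <;>
    simp [gInv, dMat, ChrExp, Matrix.vecHead, Matrix.vecTail] <;> ring

/-- The Christoffel symbols of g̃ are symmetric in the lower indices and their
values are exactly those of the stated table. -/
theorem nil4_christoffel :
    ∀ (p : Fin 4 → ℝ) (k i j : Fin 4),
      Chr p k i j = Chr p k j i ∧ Chr p k i j = ChrExp (p 3) k i j := by
  intro p k i j
  refine ⟨?_, Chr_eq p k i j⟩
  rw [Chr_eq, Chr_eq]
  fin_cases k <;> fin_cases i <;> fin_cases j <;> norm_num [ChrExp]
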